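/- arXiv:1901.02287 — 2 statements merged into one kernel-verified Lean document; each statement's English description precedes it below -/
import Mathlib

section
/- Let n ≥ 1 and let U ⊆ {0,…,2^n−1} be a nonempty set that is downward closed under binary domination (j ∈ U and i ⪯ j imply i ∈ U), and let breve(U) = {j ∈ U : there is no ℓ ∈ U with j ≺ ℓ} be its set of most dominant elements. Then for every X ⊆ {0,…,2^n−1}: U_p(X) = U if and only if |X| = |U| and there is a choice of sets Q_j ∈ ψ_j for each j ∈ breve(U) such that X = ⋃_{j ∈ breve(U)} Q_j. -/
/-- Binary domination: every binary digit of `i` is at most the corresponding digit of `j`. -/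
def bdom (i j : ℕ) : Prop := ∀ t, i.testBit t = true → j.testBit t = true

instance (i j : ℕ) : Decidable (bdom i j) :=
  decidable_of_iff (i ||| j = j) (by
    constructor
    · intro h t hi
      have h1 : (i ||| j).testBit t = j.testBit t := by rw [h]
      rw [Nat.testBit_or, hi, Bool.true_or] at h1
      exact h1.symm
    · intro h
      apply Nat.eq_of_testBit_eq
      intro t
      rw [Nat.testBit_or]
      cases hi : i.testBit t with
      | true => simp [h t hi]
      | false => simp)

/-- One step of zero-LLR propagation, computing the stage-`t` zero-LLR set from the
stage-`t+1` zero-LLR set `S`, for a polar code of length `2^n`. -/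
def zstep (n t : ℕ) (S : Finset ℕ) : Finset ℕ :=
  (Finset.range (2 ^ n)).filter fun i =>
    if i.testBit t then i ∈ S ∧ i - 2 ^ t ∈ S else i ∈ S ∨ i + 2 ^ t ∈ S

/-- Zero-LLR set at stage `t` for puncturing set `X`, for a polar code of length `2^n`:
`Zstage n X n = X` and `Zstage n X t = zstep n t (Zstage n X (t+1))` for `t < n`. -/
def Zstage (n : ℕ) (X : Finset ℕ) (t : ℕ) : Finset ℕ :=
  if _h : n ≤ t then X else zstep n t (Zstage n X (t + 1))
termination_by n - t
decreasing_by omega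

/-- The incapable set resulting from puncturing set `X`. -/
def Up (n : ℕ) (X : Finset ℕ) : Finset ℕ := Zstage n X 0

/-- `psi n j Q`: `Q` is a minimal puncturing bit pattern making bit `j` incapable. -/
def psi (n j : ℕ) (Q : Finset ℕ) : Prop :=
  Q ⊆ Finset.range (2 ^ n) ∧ j ∈ Up n Q ∧ ∀ Q' ⊂ Q, j ∉ Up n Q'


lemma testBit_add_two_pow {i t : ℕ} (h : i.testBit t = false) (s : ℕ) :
    (i + 2 ^ t).testBit s = (decide (s = t) || i.testBit s) := by
  have hi : i = 2 ^ (t+1) * (i / 2 ^ (t+1)) + i % 2 ^ (t+1) := (Nat.div_add_mod _ _).symm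
  set q := i / 2 ^ (t+1) with hq
  set r := i % 2 ^ (t+1) with hr
  have hrlt : r < 2 ^ (t+1) := Nat.mod_lt _ (Nat.two_pow_pos _)
  have hrbit : r.testBit t = false := by
    rw [hr, Nat.testBit_mod_two_pow]
    simp [h]
  have hrlt' : r < 2 ^ t := by
    by_contra hc
    push_neg at hc
    have : r / 2 ^ t = 1 := by
      have h1 : 2 ^ (t+1) = 2 ^ t * 2 := by rw [pow_succ]
      apply Nat.div_eq_of_lt_le <;> omega
    rw [Nat.testBit_eq_decide_div_mod_eq, this] at hrbit
    simp at hrbit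
  have h2 : i + 2 ^ t = 2 ^ (t+1) * q + (2 ^ t + r) := by omega
  rw [h2]
  rw [Nat.testBit_two_pow_mul_add q (b := 2 ^ t + r) (by rw [pow_succ]; omega) s]
  rw [hi, Nat.testBit_two_pow_mul_add q hrlt s]
  rcases lt_trichotomy s t with hst | hst | hst
  · simp only [if_pos (by omega : s < t + 1)]
    rw [Nat.testBit_two_pow_add_gt hst]
    simp [Nat.ne_of_lt hst, hst.ne]
  · subst hst
    simp only [if_pos (by omega : s < s + 1)]
    rw [Nat.testBit_two_pow_add_eq, hrbit]
    simp
  · simp only [if_neg (by omega : ¬ s < t + 1)]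
    simp [hst.ne']

lemma testBit_sub_two_pow {j t : ℕ} (h : j.testBit t = true) (s : ℕ) :
    (j - 2 ^ t).testBit s = (decide (s ≠ t) && j.testBit s) := by
  have hi : j = 2 ^ (t+1) * (j / 2 ^ (t+1)) + j % 2 ^ (t+1) := (Nat.div_add_mod _ _).symm
  set q := j / 2 ^ (t+1) with hq
  set r := j % 2 ^ (t+1) with hr
  have hrlt : r < 2 ^ (t+1) := Nat.mod_lt _ (Nat.two_pow_pos _)
  have hrbit : r.testBit t = true := by
    rw [hr, Nat.testBit_mod_two_pow]
    simp [h]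
  have hrge : 2 ^ t ≤ r := Nat.ge_two_pow_of_testBit hrbit
  have h2 : j - 2 ^ t = 2 ^ (t+1) * q + (r - 2 ^ t) := by
    have : (2:ℕ) ^ t ≤ 2 ^ (t+1) := Nat.pow_le_pow_right (by norm_num) (by omega)
    omega
  rw [h2]
  rw [Nat.testBit_two_pow_mul_add q (b := r - 2 ^ t) (by omega) s]
  rw [hi, Nat.testBit_two_pow_mul_add q hrlt s]
  rcases lt_trichotomy s t with hst | hst | hst
  · simp only [if_pos (by omega : s < t + 1)]
    have : r = 2 ^ t + (r - 2 ^ t) := by omega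
    rw [this, Nat.testBit_two_pow_add_gt hst]
    simp [hst.ne]
  · subst hst
    simp only [if_pos (by omega : s < s + 1)]
    rw [Nat.testBit_lt_two_pow (by omega), hrbit]
    simp
  · simp only [if_neg (by omega : ¬ s < t + 1)]
    simp [hst.ne']

lemma bdom_refl (i : ℕ) : bdom i i := fun _ h => h

lemma bdom_trans {i j k : ℕ} (h1 : bdom i j) (h2 : bdom j k) : bdom i k :=
  fun t h => h2 t (h1 t h)

lemma bdom_le {i j : ℕ} (h : bdom i j) : i ≤ j := by
  have : i &&& j = i := by
    apply Nat.eq_of_testBit_eq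
    intro t
    rw [Nat.testBit_and]
    cases hi : i.testBit t with
    | true => simp [h t hi]
    | false => simp
  calc i = i &&& j := this.symm
    _ ≤ j := Nat.and_le_right

lemma bdom_antisymm {i j : ℕ} (h1 : bdom i j) (h2 : bdom j i) : i = j :=
  le_antisymm (bdom_le h1) (bdom_le h2)


lemma Zstage_eq (n : ℕ) (X : Finset ℕ) (t : ℕ) :
    Zstage n X t = if _h : n ≤ t then X else zstep n t (Zstage n X (t + 1)) := by
  rw [Zstage]

lemma mem_zstep {n t : ℕ} {S : Finset ℕ} {i : ℕ} :
    i ∈ zstep n t S ↔ i < 2 ^ n ∧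
      (if i.testBit t then i ∈ S ∧ i - 2 ^ t ∈ S else i ∈ S ∨ i + 2 ^ t ∈ S) := by
  simp [zstep, Finset.mem_filter]

lemma zstep_mono {n t : ℕ} {S T : Finset ℕ} (h : S ⊆ T) : zstep n t S ⊆ zstep n t T := by
  intro i hi
  rw [mem_zstep] at hi ⊢
  refine ⟨hi.1, ?_⟩
  rcases hi with ⟨_, hi2⟩
  split at hi2 <;> rename_i hb
  · rw [if_pos hb]; exact ⟨h hi2.1, h hi2.2⟩
  · rw [if_neg hb]; exact hi2.imp (@h i) (@h _)

lemma Zstage_mono (n : ℕ) {X Y : Finset ℕ} (h : X ⊆ Y) (t : ℕ) :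
    Zstage n X t ⊆ Zstage n Y t := by
  rw [Zstage_eq n X t, Zstage_eq n Y t]
  split
  · exact h
  · exact zstep_mono (Zstage_mono n h (t + 1))
termination_by n - t
decreasing_by omega

lemma Zstage_subset_range (n : ℕ) {X : Finset ℕ} (hX : X ⊆ Finset.range (2 ^ n)) (t : ℕ) :
    Zstage n X t ⊆ Finset.range (2 ^ n) := by
  rw [Zstage_eq]
  split
  · exact hX
  · exact Finset.filter_subset _ _

lemma zstep_card {n t : ℕ} {S : Finset ℕ} (ht : t < n) (hS : S ⊆ Finset.range (2 ^ n)) :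
    (zstep n t S).card = S.card := by
  have hSlt : ∀ a ∈ S, a < 2 ^ n := fun a ha => Finset.mem_range.mp (hS ha)
  refine (Finset.card_nbij'
    (i := fun a => if a.testBit t then (if a - 2 ^ t ∈ S then a else a - 2 ^ t) else a)
    (j := fun c => if c.testBit t then c else (if c ∈ S then c else c + 2 ^ t))
    ?_ ?_ ?_ ?_).symm
  · -- ∀ a ∈ S, f a ∈ zstep
    intro a ha
    rw [Finset.mem_coe] at ha ⊢
    have halt := hSlt a ha
    dsimp only
    by_cases hb : a.testBit t = true
    · have hge : 2 ^ t ≤ a := Nat.ge_two_pow_of_testBit hb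
      by_cases hsub : a - 2 ^ t ∈ S
      · rw [if_pos hb, if_pos hsub, mem_zstep, if_pos hb]
        exact ⟨halt, ha, hsub⟩
      · rw [if_pos hb, if_neg hsub, mem_zstep]
        have hbit : (a - 2 ^ t).testBit t = false := by
          rw [testBit_sub_two_pow hb t]; simp
        rw [if_neg (by simp [hbit])]
        refine ⟨lt_of_le_of_lt (Nat.sub_le a _) halt, Or.inr ?_⟩
        rwa [Nat.sub_add_cancel hge]
    · rw [Bool.not_eq_true] at hb
      rw [if_neg (by simp [hb]), mem_zstep, if_neg (by simp [hb])]
      exact ⟨halt, Or.inl ha⟩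
  · -- ∀ c ∈ zstep, g c ∈ S
    intro c hc
    rw [Finset.mem_coe] at hc ⊢
    rw [mem_zstep] at hc
    obtain ⟨hlt, hc2⟩ := hc
    dsimp only
    by_cases hb : c.testBit t = true
    · rw [if_pos hb] at hc2
      rw [if_pos hb]
      exact hc2.1
    · rw [Bool.not_eq_true] at hb
      rw [if_neg (by simp [hb])] at hc2
      rw [if_neg (by simp [hb])]
      by_cases hcS : c ∈ S
      · rwa [if_pos hcS]
      · rw [if_neg hcS]
        tauto
  · -- left inverse
    intro a ha
    rw [Finset.mem_coe] at ha
    dsimp only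
    by_cases hb : a.testBit t = true
    · have hge : 2 ^ t ≤ a := Nat.ge_two_pow_of_testBit hb
      by_cases hsub : a - 2 ^ t ∈ S
      · simp [hb, hsub]
      · have hbit : (a - 2 ^ t).testBit t = false := by
          rw [testBit_sub_two_pow hb t]; simp
        simp [hb, hsub, hbit, Nat.sub_add_cancel hge]
    · rw [Bool.not_eq_true] at hb
      simp [hb, ha]
  · -- right inverse
    intro c hc
    rw [Finset.mem_coe] at hc
    rw [mem_zstep] at hc
    obtain ⟨hlt, hc2⟩ := hc
    dsimp only
    by_cases hb : c.testBit t = true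
    · rw [if_pos hb] at hc2
      rw [if_pos hb, if_pos hb, if_pos hc2.2]
    · rw [Bool.not_eq_true] at hb
      rw [if_neg (by simp [hb])] at hc2
      by_cases hcS : c ∈ S
      · simp [hb, hcS]
      · have hbit : (c + 2 ^ t).testBit t = true := by
          rw [testBit_add_two_pow hb t]; simp
        simp [hb, hcS, hbit, Nat.add_sub_cancel]

lemma Zstage_card (n : ℕ) {X : Finset ℕ} (hX : X ⊆ Finset.range (2 ^ n)) (t : ℕ) :
    (Zstage n X t).card = X.card := by
  rw [Zstage_eq]
  split <;> rename_i h
  · rfl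
  · rw [zstep_card (by omega) (Zstage_subset_range n hX (t + 1))]
    exact Zstage_card n hX (t + 1)
termination_by n - t
decreasing_by omega

lemma Zstage_down (n : ℕ) {X : Finset ℕ} (hX : X ⊆ Finset.range (2 ^ n)) (t : ℕ) :
    ∀ j ∈ Zstage n X t, ∀ s, t ≤ s → j.testBit s = true → j - 2 ^ s ∈ Zstage n X t := by
  intro j hj s hts hbit
  have hjlt : j < 2 ^ n := Finset.mem_range.mp (Zstage_subset_range n hX t hj)
  have hsge : 2 ^ s ≤ j := Nat.ge_two_pow_of_testBit hbit
  have hsn : s < n := by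
    by_contra hc
    push_neg at hc
    have : j < 2 ^ s := lt_of_lt_of_le hjlt (Nat.pow_le_pow_right (by norm_num) hc)
    rw [Nat.testBit_lt_two_pow this] at hbit
    exact Bool.false_ne_true hbit
  rw [Zstage_eq] at hj ⊢
  split at hj <;> rename_i h
  · -- n ≤ t : impossible since s ≥ t and s < n
    omega
  · -- t < n
    rw [dif_neg h] at *
    have IH := Zstage_down n hX (t + 1)
    rw [mem_zstep] at hj
    obtain ⟨_, hj2⟩ := hj
    rcases Nat.lt_or_ge t s with hts' | hts'
    · -- s > t
      have hst : s ≠ t := by omega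
      by_cases hb : j.testBit t = true
      · rw [if_pos hb] at hj2
        obtain ⟨hj3, hj4⟩ := hj2
        rw [mem_zstep]
        have hbit' : (j - 2 ^ s).testBit t = j.testBit t := by
          rw [testBit_sub_two_pow hbit t]
          simp [Ne.symm hst]
        refine ⟨lt_of_le_of_lt (Nat.sub_le _ _) hjlt, ?_⟩
        rw [hbit', if_pos hb]
        constructor
        · exact IH j hj3 s (by omega) hbit
        · have hb4 : (j - 2 ^ t).testBit s = true := by
            rw [testBit_sub_two_pow hb s]
            simp [hst, hbit]
          have := IH (j - 2 ^ t) hj4 s (by omega) hb4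
          have harith : j - 2 ^ t - 2 ^ s = j - 2 ^ s - 2 ^ t := by
            rw [Nat.sub_sub, Nat.sub_sub, Nat.add_comm]
          rwa [harith] at this
      · rw [Bool.not_eq_true] at hb
        rw [if_neg (by simp [hb])] at hj2
        rw [mem_zstep]
        have hbit' : (j - 2 ^ s).testBit t = j.testBit t := by
          rw [testBit_sub_two_pow hbit t]
          simp [Ne.symm hst]
        refine ⟨lt_of_le_of_lt (Nat.sub_le _ _) hjlt, ?_⟩
        rw [hbit', if_neg (by simp [hb])]
        rcases hj2 with hj2 | hj2
        · exact Or.inl (IH j hj2 s (by omega) hbit)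
        · refine Or.inr ?_
          have hb4 : (j + 2 ^ t).testBit s = true := by
            rw [testBit_add_two_pow hb s]
            simp [hbit]
          have := IH (j + 2 ^ t) hj2 s (by omega) hb4
          have harith : j + 2 ^ t - 2 ^ s = j - 2 ^ s + 2 ^ t := Nat.sub_add_comm hsge
          rwa [harith] at this
    · -- s = t
      have hst : s = t := by omega
      subst hst
      rw [if_pos hbit] at hj2
      rw [mem_zstep]
      have hbit' : (j - 2 ^ s).testBit s = false := by
        rw [testBit_sub_two_pow hbit s]; simp
      refine ⟨lt_of_le_of_lt (Nat.sub_le _ _) hjlt, ?_⟩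
      rw [hbit', if_neg (by simp)]
      exact Or.inr (by rw [Nat.sub_add_cancel hsge]; exact hj2.1)
termination_by n - t
decreasing_by all_goals omega

lemma Up_mono {n : ℕ} {X Y : Finset ℕ} (h : X ⊆ Y) : Up n X ⊆ Up n Y :=
  Zstage_mono n h 0

lemma Up_card {n : ℕ} {X : Finset ℕ} (hX : X ⊆ Finset.range (2 ^ n)) :
    (Up n X).card = X.card := Zstage_card n hX 0

lemma Up_down {n : ℕ} {X : Finset ℕ} (hX : X ⊆ Finset.range (2 ^ n)) :
    ∀ j ∈ Up n X, ∀ i, bdom i j → i ∈ Up n X := by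
  intro j
  induction j using Nat.strong_induction_on with
  | _ j IH =>
    intro hj i hij
    by_cases hEq : i = j
    · rwa [hEq]
    · obtain ⟨s, hs1, hs2⟩ : ∃ s, j.testBit s = true ∧ i.testBit s = false := by
        by_contra hc
        push_neg at hc
        apply hEq
        apply Nat.eq_of_testBit_eq
        intro u
        cases hu : j.testBit u with
        | true =>
          exact (Bool.not_eq_false _).mp (hc u hu)
        | false =>
          cases h2 : i.testBit u with
          | true => exact absurd (hij u h2) (by rw [hu]; simp)
          | false => rfl
      have hsge : 2 ^ s ≤ j := Nat.ge_two_pow_of_testBit hs1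
      have hj' : j - 2 ^ s ∈ Up n X := Zstage_down n hX 0 j hj s (Nat.zero_le s) hs1
      have hlt : j - 2 ^ s < j := by
        have : 0 < 2 ^ s := Nat.two_pow_pos s
        omega
      apply IH (j - 2 ^ s) hlt hj' i
      intro u hu
      rw [testBit_sub_two_pow hs1 u]
      have hus : u ≠ s := fun h => by rw [h, hs2] at hu; exact Bool.false_ne_true hu
      simp [hus, hij u hu]

lemma exists_dominant {U : Finset ℕ} {u : ℕ} (hu : u ∈ U) :
    ∃ j ∈ U, bdom u j ∧ ∀ ℓ ∈ U, ¬(bdom j ℓ ∧ j ≠ ℓ) := by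
  classical
  set D := U.filter (fun ℓ => bdom u ℓ) with hD
  have hne : D.Nonempty := ⟨u, Finset.mem_filter.mpr ⟨hu, bdom_refl u⟩⟩
  set j := D.max' hne with hj
  have hjD : j ∈ D := D.max'_mem hne
  rw [hD, Finset.mem_filter] at hjD
  refine ⟨j, hjD.1, hjD.2, ?_⟩
  rintro ℓ hℓ ⟨hbd, hne'⟩
  have hℓD : ℓ ∈ D := Finset.mem_filter.mpr ⟨hℓ, bdom_trans hjD.2 hbd⟩
  have h1 : ℓ ≤ j := D.le_max' ℓ hℓD
  have h2 : j ≤ ℓ := bdom_le hbd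
  exact hne' (le_antisymm h2 h1)

lemma exists_psi {n j : ℕ} : ∀ {X : Finset ℕ}, X ⊆ Finset.range (2 ^ n) → j ∈ Up n X →
    ∃ Q, Q ⊆ X ∧ psi n j Q := by
  classical
  intro X
  induction X using Finset.strongInduction with
  | _ X IH =>
    intro hX hj
    by_cases hmin : ∃ Q' ⊂ X, j ∈ Up n Q'
    · obtain ⟨Q', hQ'sub, hjQ'⟩ := hmin
      obtain ⟨Q, hQsub, hQpsi⟩ := IH Q' hQ'sub (subset_trans hQ'sub.subset hX) hjQ'
      exact ⟨Q, subset_trans hQsub hQ'sub.subset, hQpsi⟩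
    · push_neg at hmin
      exact ⟨X, subset_rfl, hX, hj, hmin⟩

/-- for nonempty downward-closed `U`, `U_p(X) = U` iff `|X| = |U|` and `X`
is a union of minimal patterns, one for each most dominant element of `U`. -/
theorem widely_equivalent_patterns (n : ℕ) (hn : 1 ≤ n)
    (U : Finset ℕ) (hU : U ⊆ Finset.range (2 ^ n)) (hne : U.Nonempty)
    (hdc : ∀ j ∈ U, ∀ i, bdom i j → i ∈ U)
    (X : Finset ℕ) (hX : X ⊆ Finset.range (2 ^ n)) :
    Up n X = U ↔
      (X.card = U.card ∧
        ∃ Q : ℕ → Finset ℕ,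
          (∀ j ∈ U.filter fun j => ∀ ℓ ∈ U, ¬(bdom j ℓ ∧ j ≠ ℓ), psi n j (Q j)) ∧
          X = (U.filter fun j => ∀ ℓ ∈ U, ¬(bdom j ℓ ∧ j ≠ ℓ)).biUnion Q) := by
  classical
  set B := U.filter (fun j => ∀ ℓ ∈ U, ¬(bdom j ℓ ∧ j ≠ ℓ)) with hB
  constructor
  · intro h
    have hcard : X.card = U.card := by rw [← h, Up_card hX]
    have hex : ∀ j ∈ B, ∃ Q, Q ⊆ X ∧ psi n j Q := by
      intro j hjB
      have hjU : j ∈ U := (Finset.mem_filter.mp hjB).1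
      exact exists_psi hX (h ▸ hjU)
    choose! Q hQ1 hQ2 using hex
    refine ⟨hcard, Q, hQ2, ?_⟩
    set Y := B.biUnion Q with hY
    have hYX : Y ⊆ X := Finset.biUnion_subset.mpr hQ1
    have hYrange : Y ⊆ Finset.range (2 ^ n) := hYX.trans hX
    have hUY : U ⊆ Up n Y := by
      intro u hu
      obtain ⟨j, hjU, hbd, hmax⟩ := exists_dominant hu
      have hjB : j ∈ B := Finset.mem_filter.mpr ⟨hjU, hmax⟩
      have hjQ : j ∈ Up n (Q j) := (hQ2 j hjB).2.1
      have hQY : Q j ⊆ Y := Finset.subset_biUnion_of_mem Q hjB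
      exact Up_down hYrange j (Up_mono hQY hjQ) u hbd
    have hXY : X.card ≤ Y.card := by
      have h1 : U.card ≤ (Up n Y).card := Finset.card_le_card hUY
      rw [Up_card hYrange] at h1
      omega
    exact (Finset.eq_of_subset_of_card_le hYX hXY).symm
  · rintro ⟨hcard, Q, hQ, hXeq⟩
    have hUsub : U ⊆ Up n X := by
      intro u hu
      obtain ⟨j, hjU, hbd, hmax⟩ := exists_dominant hu
      have hjB : j ∈ B := Finset.mem_filter.mpr ⟨hjU, hmax⟩
      have hQX : Q j ⊆ X := hXeq ▸ Finset.subset_biUnion_of_mem Q hjB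
      exact Up_down hX j (Up_mono hQX (hQ j hjB).2.1) u hbd
    have hle : (Up n X).card ≤ U.card := by rw [Up_card hX, hcard]
    exact (Finset.eq_of_subset_of_card_le hUsub hle).symm
end

section
/- For every n ≥ 0 and every shortening set U ⊆ {0,…,2^n−1} that is upward closed under binary domination (j ∈ U, j ⪯ k, and k < 2^n imply k ∈ U), the shortening bit pattern is identical to the resulting fixed bit pattern: X_s(U) = U. -/
/-- Polar encoder `u ↦ u · F₂^{⊗n}` over GF(2), with `F₂ = [[1,0],[1,1]]`:
`enc 0 u = u`, and `enc (n+1) u` is the concatenation of `enc n (u_L + u_H)`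
(on indices `< 2^n`) followed by `enc n u_H` (on indices `2^n, …, 2^(n+1)-1`). -/
def enc : ℕ → (ℕ → ZMod 2) → (ℕ → ZMod 2)
  | 0, u => u
  | n + 1, u => fun j =>
      if j < 2 ^ n then enc n (fun i => u i + u (i + 2 ^ n)) j
      else enc n (fun i => u (i + 2 ^ n)) (j - 2 ^ n)

lemma testBit_add_pow {n a : ℕ} (h : a < 2 ^ n) (t : ℕ) :
    (a + 2 ^ n).testBit t = if t = n then true else a.testBit t := by
  rcases lt_trichotomy t n with ht | rfl | ht
  · rw [if_neg ht.ne, Nat.add_comm, Nat.testBit_two_pow_add_gt ht]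
  · rw [if_pos rfl, Nat.add_comm, Nat.testBit_two_pow_add_eq,
      Nat.testBit_eq_false_of_lt h, Bool.not_false]
  · rw [if_neg ht.ne', Nat.testBit_eq_false_of_lt, Nat.testBit_eq_false_of_lt]
    · exact lt_of_lt_of_le h (Nat.pow_le_pow_right (by norm_num) ht.le)
    · calc a + 2 ^ n < 2 ^ n + 2 ^ n := by omega
        _ = 2 ^ (n + 1) := by ring
        _ ≤ 2 ^ t := Nat.pow_le_pow_right (by norm_num) ht

lemma bdom_low_iff {n j i : ℕ} (hj : j < 2 ^ n) (hi : i < 2 ^ n) :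
    bdom j (i + 2 ^ n) ↔ bdom j i := by
  constructor
  · intro h t ht
    have := h t ht
    rw [testBit_add_pow hi] at this
    rcases eq_or_ne t n with rfl | hne
    · exact absurd ht (by simp [Nat.testBit_eq_false_of_lt hj])
    · rwa [if_neg hne] at this
  · intro h t ht
    rw [testBit_add_pow hi]
    split
    · rfl
    · exact h t ht

lemma bdom_high_iff {n j i : ℕ} (hj : j < 2 ^ n) (hi : i < 2 ^ n) :
    bdom (j + 2 ^ n) (i + 2 ^ n) ↔ bdom j i := by
  constructor
  · intro h t ht
    have h2 : (j + 2 ^ n).testBit t = true := by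
      rw [testBit_add_pow hj]
      split
      · rfl
      · exact ht
    have := h t h2
    rw [testBit_add_pow hi] at this
    rcases eq_or_ne t n with rfl | hne
    · exact absurd ht (by simp [Nat.testBit_eq_false_of_lt hj])
    · rwa [if_neg hne] at this
  · intro h t ht
    rw [testBit_add_pow hj] at ht
    rw [testBit_add_pow hi]
    rcases eq_or_ne t n with rfl | hne
    · simp
    · rw [if_neg hne] at ht ⊢; exact h t ht

lemma not_bdom_high_low {n j i : ℕ} (hj : j < 2 ^ n) (hi : i < 2 ^ n) :
    ¬ bdom (j + 2 ^ n) i := by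
  intro h
  have h2 : (j + 2 ^ n).testBit n = true := by
    rw [testBit_add_pow hj]; simp
  have := h n h2
  rw [Nat.testBit_eq_false_of_lt hi] at this
  exact absurd this (by simp)

lemma enc_eq_sum (n : ℕ) (u : ℕ → ZMod 2) (j : ℕ) (hj : j < 2 ^ n) :
    enc n u j = ∑ i ∈ Finset.range (2 ^ n), if bdom j i then u i else 0 := by
  induction n generalizing u j with
  | zero =>
    interval_cases j
    simp [enc, bdom]
  | succ n ih =>
    have hsplit : ∀ v : ℕ → ZMod 2,
        ∑ i ∈ Finset.range (2 ^ (n + 1)), v i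
          = ∑ i ∈ Finset.range (2 ^ n), v i + ∑ i ∈ Finset.range (2 ^ n), v (i + 2 ^ n) := by
      intro v
      have h2 : 2 ^ (n + 1) = 2 ^ n + 2 ^ n := by ring
      rw [h2, Finset.sum_range_add]
      simp [Nat.add_comm]
    by_cases h : j < 2 ^ n
    · rw [show enc (n + 1) u j = enc n (fun i => u i + u (i + 2 ^ n)) j from by
        simp [enc, h]]
      rw [ih _ j h, hsplit, ← Finset.sum_add_distrib]
      apply Finset.sum_congr rfl
      intro i hi
      by_cases hb : bdom j i <;>
        simp [bdom_low_iff h (Finset.mem_range.mp hi), hb]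
    · obtain ⟨j', rfl⟩ : ∃ j', j = j' + 2 ^ n := ⟨j - 2 ^ n, by omega⟩
      have hj' : j' < 2 ^ n := by
        have : 2 ^ (n + 1) = 2 ^ n + 2 ^ n := by ring
        omega
      rw [show enc (n + 1) u (j' + 2 ^ n) = enc n (fun i => u (i + 2 ^ n)) j' from by
        simp [enc, h]]
      rw [ih _ _ hj', hsplit]
      have h1 : ∑ i ∈ Finset.range (2 ^ n),
          (if bdom (j' + 2 ^ n) i then u i else 0) = 0 := by
        apply Finset.sum_eq_zero
        intro i hi
        exact if_neg (not_bdom_high_low hj' (Finset.mem_range.mp hi))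
      rw [h1, zero_add]
      apply Finset.sum_congr rfl
      intro i hi
      congr 1
      rw [eq_iff_iff]
      exact (bdom_high_iff hj' (Finset.mem_range.mp hi)).symm

/-- The fixed bit pattern at the encoder output resulting from shortening the
encoder input bits with indices in `U`. -/
def Xs (n : ℕ) (U : Set ℕ) : Set ℕ :=
  {j | j < 2 ^ n ∧ ∀ u : ℕ → ZMod 2, (∀ i ∈ U, u i = 0) → enc n u j = 0}

/-- for an upward-closed shortening set, the shortening bit pattern is
identical to the resulting fixed bit pattern: `X_s(U) = U`. -/
theorem shortening_eq_fixed (n : ℕ) (U : Set ℕ) (hU : ∀ i ∈ U, i < 2 ^ n)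
    (huc : ∀ j ∈ U, ∀ k, k < 2 ^ n → bdom j k → k ∈ U) :
    Xs n U = U := by
  ext j
  constructor
  · rintro ⟨hj, hz⟩
    by_contra hjU
    have h := hz (fun i => if i = j then 1 else 0) (fun i hiU => by
      show (if i = j then (1 : ZMod 2) else 0) = 0
      rw [if_neg]; rintro rfl; exact hjU hiU)
    rw [enc_eq_sum n _ j hj] at h
    rw [Finset.sum_eq_single j] at h
    · rw [if_pos (show bdom j j from fun t ht => ht), if_pos rfl] at h
      exact one_ne_zero h
    · intro i _ hij
      simp [hij]
    · intro hjr
      exact absurd (Finset.mem_range.mpr hj) hjr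
  · intro hjU
    refine ⟨hU j hjU, fun u hu => ?_⟩
    rw [enc_eq_sum n u j (hU j hjU)]
    apply Finset.sum_eq_zero
    intro i hi
    split
    · exact hu i (huc j hjU i (Finset.mem_range.mp hi) ‹_›)
    · rfl
end
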